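/- Let X be a Generalized Benford random variable with parameter α ≠ 0, i.e., P(S(X) ≤ u) = (u^α − 1)/(10^α − 1) for u ∈ [1,10). Then for u ∈ [0,1), the distribution function of the fractional part of the significand is F(u) = (1/(10^α − 1)) Σ_{d=1}^{9} ((d+u)^α − d^α). -/

import Mathlib

open MeasureTheory

/-- If `X` is a Generalized Benford random variable with parameter `α ≠ 0`, i.e.
`P(S(X) ≤ u) = (u^α − 1)/(10^α − 1)` for `u ∈ [1,10)`, then for `u ∈ [0,1)` the CDF of
the fractional part of the significand is `(1/(10^α − 1)) ∑_{d=1}^9 ((d+u)^α − d^α)`. -/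
theorem generalized_benford_fract_cdf {Ω : Type*} [MeasurableSpace Ω] (μ : Measure Ω)
    [IsProbabilityMeasure μ] (S : Ω → ℝ) (hS : Measurable S) (α : ℝ) (hα : α ≠ 0)
    (hrange : ∀ ω, S ω ∈ Set.Ico (1 : ℝ) 10)
    (hGB : ∀ u ∈ Set.Ico (1 : ℝ) 10,
      (μ {ω | S ω ≤ u}).toReal = (u ^ α - 1) / ((10 : ℝ) ^ α - 1)) :
    ∀ u ∈ Set.Ico (0 : ℝ) 1,
      (μ {ω | Int.fract (S ω) ≤ u}).toReal
        = (1 / ((10 : ℝ) ^ α - 1))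
          * ∑ d ∈ Finset.Icc (1 : ℕ) 9, (((d : ℝ) + u) ^ α - (d : ℝ) ^ α) := by
  intro u hu
  obtain ⟨hu0, hu1⟩ := hu
  set c : ℝ := (10 : ℝ) ^ α - 1 with hc_def
  -- c ≠ 0
  have hc : c ≠ 0 := by
    have h1 : (10 : ℝ) ^ α ≠ 1 := by
      rcases hα.lt_or_gt with h | h
      · exact (Real.rpow_lt_one_of_one_lt_of_neg (by norm_num) h).ne
      · exact ((Real.one_lt_rpow_iff_of_pos (by norm_num)).mpr
          (Or.inl ⟨by norm_num, h⟩)).ne'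
    exact sub_ne_zero.mpr h1
  -- measure of {S < d} for d ∈ [1,10)
  have hlt : ∀ d : ℝ, 1 ≤ d → d < 10 → (μ {ω | S ω < d}).toReal = (d ^ α - 1) / c := by
    intro d hd1 hd10
    rcases eq_or_lt_of_le hd1 with h1 | h1
    · have : {ω | S ω < d} = ∅ := by
        ext ω
        simp only [Set.mem_setOf_eq, Set.mem_empty_iff_false, iff_false, not_lt]
        rw [← h1]; exact (hrange ω).1
      rw [this]
      simp [Real.rpow_natCast, ← h1, Real.one_rpow]
    · -- d > 1
      set v : ℕ → ℝ := fun n => d - (d - 1) / (n + 1) with hv_def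
      have hv1 : ∀ n, 1 ≤ v n := by
        intro n
        have hpos : (0:ℝ) < (n:ℝ) + 1 := by positivity
        have : (d - 1) / ((n:ℝ) + 1) ≤ d - 1 := by
          rw [div_le_iff₀ hpos]
          nlinarith [Nat.cast_nonneg (α := ℝ) n]
        simp only [hv_def]; linarith
      have hvlt : ∀ n, v n < d := by
        intro n
        have hpos : (0:ℝ) < (d - 1) / ((n:ℝ) + 1) := by
          apply div_pos (by linarith) (by positivity)
        simp only [hv_def]; linarith
      have hmono : Monotone (fun n => {ω | S ω ≤ v n}) := by
        intro m n hmn ω hω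
        have : v m ≤ v n := by
          simp only [hv_def]
          have h1 : (0:ℝ) < (m:ℝ) + 1 := by positivity
          have h2 : ((m:ℝ) + 1) ≤ (n:ℝ) + 1 := by
            have := (Nat.cast_le (α := ℝ)).mpr hmn; linarith
          have := div_le_div_of_nonneg_left (by linarith : (0:ℝ) ≤ d - 1) h1 h2
          linarith
        exact le_trans hω this
      have hUnion : {ω | S ω < d} = ⋃ n, {ω | S ω ≤ v n} := by
        ext ω
        simp only [Set.mem_setOf_eq, Set.mem_iUnion]
        constructor
        · intro h
          obtain ⟨n, hn⟩ := exists_nat_gt ((d - 1) / (d - S ω))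
          refine ⟨n, ?_⟩
          have hds : (0:ℝ) < d - S ω := by linarith
          have : (d - 1) / ((n:ℝ) + 1) < d - S ω := by
            rw [div_lt_iff₀ (by positivity)]
            have h2 : (d - 1) / (d - S ω) < (n:ℝ) + 1 := by linarith
            calc d - 1 = ((d - 1) / (d - S ω)) * (d - S ω) := by
                  field_simp
              _ < ((n:ℝ) + 1) * (d - S ω) := by
                  exact mul_lt_mul_of_pos_right h2 hds
              _ = (d - S ω) * ((n:ℝ) + 1) := by ring
          simp only [hv_def]; linarith
        · rintro ⟨n, hn⟩
          exact lt_of_le_of_lt hn (hvlt n)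
      -- measure convergence
      have hmeas : Filter.Tendsto (fun n => μ {ω | S ω ≤ v n}) Filter.atTop
          (nhds (μ {ω | S ω < d})) := by
        rw [hUnion]
        exact tendsto_measure_iUnion_atTop hmono
      have hne : μ {ω | S ω < d} ≠ ⊤ := measure_ne_top μ _
      have hmeasR : Filter.Tendsto (fun n => (μ {ω | S ω ≤ v n}).toReal) Filter.atTop
          (nhds (μ {ω | S ω < d}).toReal) := (ENNReal.tendsto_toReal hne).comp hmeas
      have heq : ∀ n, (μ {ω | S ω ≤ v n}).toReal = ((v n) ^ α - 1) / c := by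
        intro n
        exact hGB (v n) ⟨hv1 n, lt_trans (hvlt n) hd10⟩
      have hvtend : Filter.Tendsto v Filter.atTop (nhds d) := by
        have h0 : Filter.Tendsto (fun n : ℕ => (d - 1) / ((n:ℝ) + 1)) Filter.atTop
            (nhds 0) := by
          have := tendsto_one_div_add_atTop_nhds_zero_nat (𝕜 := ℝ)
          have h := this.const_mul (d - 1)
          simpa [mul_one_div, div_eq_mul_inv] using h
        have := (tendsto_const_nhds (x := d) (f := Filter.atTop (α := ℕ))).sub h0
        simpa using this
      have hcont : Filter.Tendsto (fun n => ((v n) ^ α - 1) / c) Filter.atTop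
          (nhds ((d ^ α - 1) / c)) := by
        have hd0 : d ≠ 0 := by linarith
        have hrc : Filter.Tendsto (fun n => (v n) ^ α) Filter.atTop (nhds (d ^ α)) :=
          (Real.continuousAt_rpow_const d α (Or.inl hd0)).tendsto.comp hvtend
        exact (hrc.sub tendsto_const_nhds).div_const c
      have : Filter.Tendsto (fun n => (μ {ω | S ω ≤ v n}).toReal) Filter.atTop
          (nhds ((d ^ α - 1) / c)) := by
        rw [show (fun n => (μ {ω | S ω ≤ v n}).toReal) = fun n => ((v n) ^ α - 1) / c from
          funext heq]
        exact hcont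
      exact tendsto_nhds_unique hmeasR this
  -- decompose the event
  have hdecomp : {ω | Int.fract (S ω) ≤ u}
      = ⋃ d ∈ Finset.Icc (1 : ℕ) 9, {ω | (d : ℝ) ≤ S ω ∧ S ω ≤ (d : ℝ) + u} := by
    ext ω
    obtain ⟨hS1, hS10⟩ := hrange ω
    simp only [Set.mem_setOf_eq, Set.mem_iUnion, Finset.mem_Icc, exists_prop]
    constructor
    · intro h
      have hfl1 : (1 : ℤ) ≤ ⌊S ω⌋ := Int.le_floor.mpr (by exact_mod_cast hS1)
      have hfl9 : ⌊S ω⌋ ≤ 9 := by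
        have : ⌊S ω⌋ < 10 := Int.floor_lt.mpr (by exact_mod_cast hS10)
        omega
      refine ⟨⌊S ω⌋.toNat, ⟨by omega, by omega⟩, ?_, ?_⟩
      · have : ((⌊S ω⌋.toNat : ℤ) : ℝ) = (⌊S ω⌋ : ℝ) := by
          congr 1; omega
        rw [show ((⌊S ω⌋.toNat : ℕ) : ℝ) = ((⌊S ω⌋.toNat : ℤ) : ℝ) by push_cast; ring, this]
        exact Int.floor_le (S ω)
      · have h2 : S ω - (⌊S ω⌋ : ℝ) ≤ u := by
          have := Int.self_sub_floor (S ω)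
          rw [this]; exact h
        have : ((⌊S ω⌋.toNat : ℤ) : ℝ) = (⌊S ω⌋ : ℝ) := by congr 1; omega
        rw [show ((⌊S ω⌋.toNat : ℕ) : ℝ) = ((⌊S ω⌋.toNat : ℤ) : ℝ) by push_cast; ring, this]
        linarith
    · rintro ⟨d, ⟨hd1, hd9⟩, hdS, hSdu⟩
      have hfloor : ⌊S ω⌋ = (d : ℤ) := by
        apply Int.floor_eq_iff.mpr
        constructor
        · exact_mod_cast hdS
        · push_cast; linarith
      rw [Int.fract, hfloor]
      push_cast
      linarith
  rw [hdecomp]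
  -- disjointness and measurability
  have hmeas' : ∀ d ∈ Finset.Icc (1 : ℕ) 9,
      MeasurableSet {ω | (d : ℝ) ≤ S ω ∧ S ω ≤ (d : ℝ) + u} := by
    intro d _
    exact (hS measurableSet_Ici).inter (hS measurableSet_Iic)
  have hdisj : Set.PairwiseDisjoint (↑(Finset.Icc (1 : ℕ) 9))
      (fun d : ℕ => {ω | (d : ℝ) ≤ S ω ∧ S ω ≤ (d : ℝ) + u}) := by
    intro d hd e he hde
    simp only [Function.onFun, Set.disjoint_left]
    intro ω hω1 hω2
    obtain ⟨hd1, hd2⟩ := hω1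
    obtain ⟨he1, he2⟩ := hω2
    rcases lt_or_gt_of_ne hde with h | h
    · have : (d : ℝ) + 1 ≤ (e : ℝ) := by exact_mod_cast Nat.succ_le_of_lt h
      linarith
    · have : (e : ℝ) + 1 ≤ (d : ℝ) := by exact_mod_cast Nat.succ_le_of_lt h
      linarith
  rw [measure_biUnion_finset hdisj hmeas']
  rw [ENNReal.toReal_sum (fun d _ => measure_ne_top μ _)]
  -- each summand
  have hterm : ∀ d ∈ Finset.Icc (1 : ℕ) 9,
      (μ {ω | (d : ℝ) ≤ S ω ∧ S ω ≤ (d : ℝ) + u}).toReal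
        = (((d : ℝ) + u) ^ α - (d : ℝ) ^ α) / c := by
    intro d hd
    rw [Finset.mem_Icc] at hd
    obtain ⟨hd1, hd9⟩ := hd
    have hd1' : (1 : ℝ) ≤ (d : ℝ) := by exact_mod_cast hd1
    have hd9' : (d : ℝ) ≤ 9 := by exact_mod_cast hd9
    have hset : {ω | (d : ℝ) ≤ S ω ∧ S ω ≤ (d : ℝ) + u}
        = {ω | S ω ≤ (d : ℝ) + u} \ {ω | S ω < (d : ℝ)} := by
      ext ω
      simp only [Set.mem_setOf_eq, Set.mem_diff, not_lt]
      tauto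
    have hsub : {ω | S ω < (d : ℝ)} ⊆ {ω | S ω ≤ (d : ℝ) + u} := by
      intro ω hω
      simp only [Set.mem_setOf_eq] at *
      linarith
    rw [hset, measure_diff hsub (hS measurableSet_Iio).nullMeasurableSet (measure_ne_top μ _),
      ENNReal.toReal_sub_of_le (measure_mono hsub) (measure_ne_top μ _)]
    rw [hGB ((d : ℝ) + u) ⟨by linarith, by linarith⟩, hlt (d : ℝ) hd1' (by linarith)]
    ring
  rw [Finset.sum_congr rfl hterm, ← Finset.sum_div]
  field_simp
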